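/- Let D ≥ 1 and let ξ_{βγ} = ξ_{γβ} be a smooth symmetric tensor field on ℝ^D. Define the totally symmetric field T_{αβγ} := ∂_α ξ_{βγ} + ∂_β ξ_{γα} + ∂_γ ξ_{αβ}. Then the spin-3 curvature of T vanishes identically: for all indices α₁, β₁, α₂, β₂, α₃, β₃, one has Σ_{(s₁,s₂,s₃)∈{0,1}³} (−1)^{s₁+s₂+s₃} ∂_{c₁}∂_{c₂}∂_{c₃} T_{d₁d₂d₃} = 0 on ℝ^D, where (c_i, d_i) = (α_i, β_i) if s_i = 0 and (c_i, d_i) = (β_i, α_i) if s_i = 1. -/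

import Mathlib

/-- The partial derivative `∂_μ f` of a function `f : ℝ^D → ℝ`. -/
noncomputable def pd {D : ℕ} (μ : Fin D) (f : (Fin D → ℝ) → ℝ) : (Fin D → ℝ) → ℝ :=
  fun x => fderiv ℝ f x (Pi.single μ 1)

/-- Sign `(−1)^s` attached to `s ∈ {0,1}`, with `false ↦ 1` and `true ↦ −1`. -/
def bsign (s : Bool) : ℝ := if s then -1 else 1

/-- The upper index of the pair `(c, d)`: `(c,d) = (a,b)` if `s = 0` and `(b,a)` if `s = 1`. -/
def bfst {D : ℕ} (s : Bool) (a b : Fin D) : Fin D := if s then b else a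

/-- The lower index of the pair `(c, d)`: `(c,d) = (a,b)` if `s = 0` and `(b,a)` if `s = 1`. -/
def bsnd {D : ℕ} (s : Bool) (a b : Fin D) : Fin D := if s then a else b

/-- The spin-3 curvature of a rank-3 tensor field `T` on `ℝ^D`:
`R[T]_{α₁β₁α₂β₂α₃β₃} = Σ_{(s₁,s₂,s₃)∈{0,1}³} (−1)^{s₁+s₂+s₃} ∂_{c₁}∂_{c₂}∂_{c₃} T_{d₁d₂d₃}`,
i.e. `∂_{α₁}∂_{α₂}∂_{α₃} T_{β₁β₂β₃}` antisymmetrized in each pair `(α_i, β_i)`. -/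
noncomputable def spin3Curv {D : ℕ} (T : Fin D → Fin D → Fin D → (Fin D → ℝ) → ℝ)
    (α₁ β₁ α₂ β₂ α₃ β₃ : Fin D) : (Fin D → ℝ) → ℝ := fun x =>
  ∑ s : Bool × Bool × Bool,
    (bsign s.1 * bsign s.2.1 * bsign s.2.2) *
      pd (bfst s.1 α₁ β₁) (pd (bfst s.2.1 α₂ β₂) (pd (bfst s.2.2 α₃ β₃)
        (T (bsnd s.1 α₁ β₁) (bsnd s.2.1 α₂ β₂) (bsnd s.2.2 α₃ β₃)))) x

section Helpers

variable {D : ℕ}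

lemma pd_contDiff {f : (Fin D → ℝ) → ℝ} (hf : ContDiff ℝ (⊤ : ℕ∞) f) (μ : Fin D) :
    ContDiff ℝ (⊤ : ℕ∞) (pd μ f) :=
  (hf.fderiv_right (by simp)).clm_apply contDiff_const

lemma pd_comm {f : (Fin D → ℝ) → ℝ} (hf : ContDiff ℝ (⊤ : ℕ∞) f) (a b : Fin D) :
    pd a (pd b f) = pd b (pd a f) := by
  funext x
  have h1 : DifferentiableAt ℝ (fderiv ℝ f) x :=
    ((hf.fderiv_right (m := (⊤ : ℕ∞)) (by simp)).differentiable (by simp)) x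
  have e : ∀ c d : Fin D, pd c (pd d f) x =
      fderiv ℝ (fderiv ℝ f) x (Pi.single c 1) (Pi.single d 1) := by
    intro c d
    show fderiv ℝ (fun y => fderiv ℝ f y (Pi.single d 1)) x (Pi.single c 1) = _
    rw [fderiv_clm_apply h1 (differentiableAt_const _)]
    simp
  rw [e, e]
  exact second_derivative_symmetric
    (fun y => ((hf.differentiable (by simp)) y).hasFDerivAt) h1.hasFDerivAt _ _

lemma pd_add3 {u v w : (Fin D → ℝ) → ℝ} (hu : ContDiff ℝ (⊤ : ℕ∞) u)
    (hv : ContDiff ℝ (⊤ : ℕ∞) v) (hw : ContDiff ℝ (⊤ : ℕ∞) w) (μ : Fin D) :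
    pd μ (fun y => u y + v y + w y) = fun y => pd μ u y + pd μ v y + pd μ w y := by
  funext x
  simp only [pd]
  rw [fderiv_fun_add (((hu.differentiable (by simp)) x).fun_add ((hv.differentiable (by simp)) x))
      ((hw.differentiable (by simp)) x),
    fderiv_fun_add ((hu.differentiable (by simp)) x) ((hv.differentiable (by simp)) x)]
  simp

/-- Push three outer derivatives through a three-term sum. -/
lemma pd3_add3 {u v w : (Fin D → ℝ) → ℝ} (hu : ContDiff ℝ (⊤ : ℕ∞) u)
    (hv : ContDiff ℝ (⊤ : ℕ∞) v) (hw : ContDiff ℝ (⊤ : ℕ∞) w) (a b c : Fin D) :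
    pd a (pd b (pd c (fun y => u y + v y + w y))) =
      fun y => pd a (pd b (pd c u)) y + pd a (pd b (pd c v)) y + pd a (pd b (pd c w)) y := by
  rw [pd_add3 hu hv hw, pd_add3 (pd_contDiff hu c) (pd_contDiff hv c) (pd_contDiff hw c),
    pd_add3 (pd_contDiff (pd_contDiff hu c) b) (pd_contDiff (pd_contDiff hv c) b)
      (pd_contDiff (pd_contDiff hw c) b)]

/-- Swap the 1st and 3rd derivative. -/
lemma pd_comm13 {g : (Fin D → ℝ) → ℝ} (hg : ContDiff ℝ (⊤ : ℕ∞) g) (a b c : Fin D) :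
    pd a (pd b (pd c g)) = pd c (pd b (pd a g)) := by
  rw [pd_comm hg b c, pd_comm (pd_contDiff hg b) a c]
  exact congrArg _ (pd_comm hg a b)

/-- Swap the 1st and 4th derivative. -/
lemma pd_comm14 {g : (Fin D → ℝ) → ℝ} (hg : ContDiff ℝ (⊤ : ℕ∞) g) (a b c d : Fin D) :
    pd a (pd b (pd c (pd d g))) = pd d (pd b (pd c (pd a g))) := by
  rw [pd_comm13 hg b c d, pd_comm (pd_contDiff (pd_contDiff hg b) c) a d]
  exact congrArg _ (pd_comm13 hg a c b)

/-- Swap the 2nd and 4th derivative. -/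
lemma pd_comm24 {g : (Fin D → ℝ) → ℝ} (hg : ContDiff ℝ (⊤ : ℕ∞) g) (a b c d : Fin D) :
    pd a (pd b (pd c (pd d g))) = pd a (pd d (pd c (pd b g))) := by
  exact congrArg _ (pd_comm13 hg b c d)

/-- Swap the 3rd and 4th derivative. -/
lemma pd_comm34 {g : (Fin D → ℝ) → ℝ} (hg : ContDiff ℝ (⊤ : ℕ∞) g) (a b c d : Fin D) :
    pd a (pd b (pd c (pd d g))) = pd a (pd b (pd d (pd c g))) := by
  rw [pd_comm hg c]

end Helpers

/-- Gauge invariance of the spin-3 curvature: the curvature of the pure gauge field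
`T_{αβγ} = ∂_α ξ_{βγ} + ∂_β ξ_{γα} + ∂_γ ξ_{αβ}` vanishes identically. -/
theorem spin_three_pure_gauge_has_zero_curvature (D : ℕ) (hD : 1 ≤ D)
    (ξ : Fin D → Fin D → (Fin D → ℝ) → ℝ)
    (hsmooth : ∀ β γ, ContDiff ℝ (⊤ : ℕ∞) (ξ β γ))
    (hξsym : ∀ β γ, ξ β γ = ξ γ β)
    (T : Fin D → Fin D → Fin D → (Fin D → ℝ) → ℝ)
    (hT : ∀ α β γ x, T α β γ x = pd α (ξ β γ) x + pd β (ξ γ α) x + pd γ (ξ α β) x) :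
    ∀ α₁ β₁ α₂ β₂ α₃ β₃ x, spin3Curv T α₁ β₁ α₂ β₂ α₃ β₃ x = 0 := by
  intro α₁ β₁ α₂ β₂ α₃ β₃ x
  have hTfun : ∀ a b c, T a b c = fun y => pd a (ξ b c) y + pd b (ξ c a) y + pd c (ξ a b) y :=
    fun a b c => funext (hT a b c)
  have key : ∀ s : Bool × Bool × Bool,
      (bsign s.1 * bsign s.2.1 * bsign s.2.2) *
        pd (bfst s.1 α₁ β₁) (pd (bfst s.2.1 α₂ β₂) (pd (bfst s.2.2 α₃ β₃)
          (T (bsnd s.1 α₁ β₁) (bsnd s.2.1 α₂ β₂) (bsnd s.2.2 α₃ β₃)))) x =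
      (bsign s.1 * bsign s.2.1 * bsign s.2.2) *
        pd (bfst s.1 α₁ β₁) (pd (bfst s.2.1 α₂ β₂) (pd (bfst s.2.2 α₃ β₃)
          (pd (bsnd s.1 α₁ β₁) (ξ (bsnd s.2.1 α₂ β₂) (bsnd s.2.2 α₃ β₃))))) x +
      (bsign s.1 * bsign s.2.1 * bsign s.2.2) *
        pd (bfst s.1 α₁ β₁) (pd (bfst s.2.1 α₂ β₂) (pd (bfst s.2.2 α₃ β₃)
          (pd (bsnd s.2.1 α₂ β₂) (ξ (bsnd s.2.2 α₃ β₃) (bsnd s.1 α₁ β₁))))) x +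
      (bsign s.1 * bsign s.2.1 * bsign s.2.2) *
        pd (bfst s.1 α₁ β₁) (pd (bfst s.2.1 α₂ β₂) (pd (bfst s.2.2 α₃ β₃)
          (pd (bsnd s.2.2 α₃ β₃) (ξ (bsnd s.1 α₁ β₁) (bsnd s.2.1 α₂ β₂))))) x := by
    intro s
    rw [hTfun, pd3_add3 (pd_contDiff (hsmooth _ _) _) (pd_contDiff (hsmooth _ _) _)
      (pd_contDiff (hsmooth _ _) _)]
    simp only []
    ring
  have hA : ∑ s : Bool × Bool × Bool,
      (bsign s.1 * bsign s.2.1 * bsign s.2.2) *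
        pd (bfst s.1 α₁ β₁) (pd (bfst s.2.1 α₂ β₂) (pd (bfst s.2.2 α₃ β₃)
          (pd (bsnd s.1 α₁ β₁) (ξ (bsnd s.2.1 α₂ β₂) (bsnd s.2.2 α₃ β₃))))) x = 0 := by
    simp only [Fintype.sum_prod_type, Fintype.sum_bool, bsign, bfst, bsnd, if_true, if_false,
      Bool.false_eq_true, ite_true, ite_false]
    rw [pd_comm14 (hsmooth β₂ β₃) β₁ α₂ α₃ α₁,
        pd_comm14 (hsmooth β₂ α₃) β₁ α₂ β₃ α₁,
        pd_comm14 (hsmooth α₂ β₃) β₁ β₂ α₃ α₁,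
        pd_comm14 (hsmooth α₂ α₃) β₁ β₂ β₃ α₁]
    ring
  have hB : ∑ s : Bool × Bool × Bool,
      (bsign s.1 * bsign s.2.1 * bsign s.2.2) *
        pd (bfst s.1 α₁ β₁) (pd (bfst s.2.1 α₂ β₂) (pd (bfst s.2.2 α₃ β₃)
          (pd (bsnd s.2.1 α₂ β₂) (ξ (bsnd s.2.2 α₃ β₃) (bsnd s.1 α₁ β₁))))) x = 0 := by
    simp only [Fintype.sum_prod_type, Fintype.sum_bool, bsign, bfst, bsnd, if_true, if_false,
      Bool.false_eq_true, ite_true, ite_false]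
    rw [pd_comm24 (hsmooth β₃ β₁) α₁ β₂ α₃ α₂,
        pd_comm24 (hsmooth α₃ β₁) α₁ β₂ β₃ α₂,
        pd_comm24 (hsmooth β₃ α₁) β₁ β₂ α₃ α₂,
        pd_comm24 (hsmooth α₃ α₁) β₁ β₂ β₃ α₂]
    ring
  have hC : ∑ s : Bool × Bool × Bool,
      (bsign s.1 * bsign s.2.1 * bsign s.2.2) *
        pd (bfst s.1 α₁ β₁) (pd (bfst s.2.1 α₂ β₂) (pd (bfst s.2.2 α₃ β₃)
          (pd (bsnd s.2.2 α₃ β₃) (ξ (bsnd s.1 α₁ β₁) (bsnd s.2.1 α₂ β₂))))) x = 0 := by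
    simp only [Fintype.sum_prod_type, Fintype.sum_bool, bsign, bfst, bsnd, if_true, if_false,
      Bool.false_eq_true, ite_true, ite_false]
    rw [pd_comm34 (hsmooth β₁ β₂) α₁ α₂ β₃ α₃,
        pd_comm34 (hsmooth β₁ α₂) α₁ β₂ β₃ α₃,
        pd_comm34 (hsmooth α₁ β₂) β₁ α₂ β₃ α₃,
        pd_comm34 (hsmooth α₁ α₂) β₁ β₂ β₃ α₃]
    ring
  simp only [spin3Curv]
  rw [Finset.sum_congr rfl (fun s _ => key s), Finset.sum_add_distrib, Finset.sum_add_distrib,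
    hA, hB, hC]
  norm_num
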